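/- Let C be a partial quadrant in an sc-Banach space E, meaning there is a linear sc-isomorphism T: E → ℝᵏ ⊕ W with T(C) = [0,∞)ᵏ ⊕ W. Then the degeneracy index d_C(x) = #{i ∈ {1,...,k} : (T x)_i = 0}, for x ∈ C, is independent of the choice of the linear sc-isomorphism T. -/
import Mathlib

open Filter Topology

/-- Membership in `C` is detected by nonnegativity of the `Fin k` coordinates. -/
private lemma quadrant_mem {E W : Type*} [NormedAddCommGroup E] [NormedSpace ℝ E]
    [NormedAddCommGroup W] [NormedSpace ℝ W] {k : ℕ} {C : Set E}
    (T : E ≃L[ℝ] (Fin k → ℝ) × W)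
    (hT : T '' C = {p : (Fin k → ℝ) × W | ∀ i, 0 ≤ p.1 i}) (y : E) :
    y ∈ C ↔ ∀ i, 0 ≤ (T y).1 i := by
  constructor
  · intro hy i
    have : T y ∈ T '' C := ⟨y, hy, rfl⟩
    rw [hT] at this
    exact this i
  · intro h
    have : T y ∈ T '' C := by rw [hT]; exact h
    obtain ⟨z, hz, hzy⟩ := this
    have : z = y := T.injective hzy
    rwa [this] at hz

/-- The key coordinate-free characterization: `(T v).1` vanishes on the zero coordinates of
`(T x).1` iff `x ± ε • v ∈ C` for some small `ε > 0`. -/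
private lemma aux_char {E W : Type*} [NormedAddCommGroup E] [NormedSpace ℝ E]
    [NormedAddCommGroup W] [NormedSpace ℝ W] {k : ℕ} {C : Set E}
    (T : E ≃L[ℝ] (Fin k → ℝ) × W)
    (hT : T '' C = {p : (Fin k → ℝ) × W | ∀ i, 0 ≤ p.1 i})
    (x : E) (hx : x ∈ C) (v : E) :
    (∀ i, (T x).1 i = 0 → (T v).1 i = 0) ↔
      (∃ ε > (0:ℝ), x + ε • v ∈ C ∧ x - ε • v ∈ C) := by
  have hcoord : ∀ (ε : ℝ) (i : Fin k),
      (T (x + ε • v)).1 i = (T x).1 i + ε * (T v).1 i := by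
    intro ε i
    simp [map_add, map_smul]
  have hcoord' : ∀ (ε : ℝ) (i : Fin k),
      (T (x - ε • v)).1 i = (T x).1 i - ε * (T v).1 i := by
    intro ε i
    simp [map_sub, map_smul]
  constructor
  · intro h
    have hev : ∀ᶠ ε in 𝓝[>] (0:ℝ), ∀ i,
        0 ≤ (T x).1 i + ε * (T v).1 i ∧ 0 ≤ (T x).1 i - ε * (T v).1 i := by
      rw [eventually_all]
      intro i
      by_cases hi : (T x).1 i = 0
      · have hv := h i hi
        filter_upwards with ε
        simp [hi, hv]
      · have hpos : 0 < (T x).1 i :=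
          lt_of_le_of_ne ((quadrant_mem T hT x).1 hx i) (Ne.symm hi)
        have h1 : ContinuousAt (fun ε : ℝ => (T x).1 i + ε * (T v).1 i) 0 := by fun_prop
        have h2 : ContinuousAt (fun ε : ℝ => (T x).1 i - ε * (T v).1 i) 0 := by fun_prop
        have e1 : ∀ᶠ ε in 𝓝 (0:ℝ), 0 < (T x).1 i + ε * (T v).1 i :=
          h1.eventually (eventually_gt_nhds
            (show (0:ℝ) < (fun ε : ℝ => (T x).1 i + ε * (T v).1 i) 0 by simpa using hpos))
        have e2 : ∀ᶠ ε in 𝓝 (0:ℝ), 0 < (T x).1 i - ε * (T v).1 i :=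
          h2.eventually (eventually_gt_nhds
            (show (0:ℝ) < (fun ε : ℝ => (T x).1 i - ε * (T v).1 i) 0 by simpa using hpos))
        have e3 : ∀ᶠ ε in 𝓝[>] (0:ℝ),
            0 < (T x).1 i + ε * (T v).1 i ∧ 0 < (T x).1 i - ε * (T v).1 i :=
          (e1.and e2).filter_mono nhdsWithin_le_nhds
        filter_upwards [e3] with ε hε
        exact ⟨hε.1.le, hε.2.le⟩
    obtain ⟨ε, hε, hεpos⟩ := (hev.and self_mem_nhdsWithin).exists
    refine ⟨ε, hεpos, ?_, ?_⟩
    · rw [quadrant_mem T hT]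
      intro i
      rw [hcoord]
      exact (hε i).1
    · rw [quadrant_mem T hT]
      intro i
      rw [hcoord']
      exact (hε i).2
  · rintro ⟨ε, hεpos, h1, h2⟩ i hi
    have k1 := (quadrant_mem T hT _).1 h1 i
    have k2 := (quadrant_mem T hT _).1 h2 i
    rw [hcoord, hi] at k1
    rw [hcoord', hi] at k2
    have : ε * (T v).1 i = 0 := le_antisymm (by linarith) (by linarith)
    rcases mul_eq_zero.1 this with h | h
    · exact absurd h (ne_of_gt hεpos)
    · exact h

/-- The coordinate projection onto the zero set, as a linear map. -/
private def projZ {W : Type*} [NormedAddCommGroup W] [NormedSpace ℝ W] {k : ℕ}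
    (Z : Set (Fin k)) : ((Fin k → ℝ) × W) →ₗ[ℝ] (↥Z → ℝ) where
  toFun p := fun i => p.1 i.1
  map_add' p q := by funext i; rfl
  map_smul' c p := by funext i; rfl

private lemma projZ_surjective {W : Type*} [NormedAddCommGroup W] [NormedSpace ℝ W] {k : ℕ}
    (Z : Set (Fin k)) : Function.Surjective (projZ (W := W) Z) := by
  classical
  intro f
  refine ⟨(fun j => if h : j ∈ Z then f ⟨j, h⟩ else 0, 0), ?_⟩
  funext i
  simp [projZ, i.2]

/-- The degeneracy index equals the corank of the choice-independent subspace
`{v | ∃ ε > 0, x + ε • v ∈ C ∧ x - ε • v ∈ C}`. -/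
private lemma ncard_eq_finrank {E W : Type*} [NormedAddCommGroup E] [NormedSpace ℝ E]
    [NormedAddCommGroup W] [NormedSpace ℝ W] {k : ℕ} {C : Set E}
    (T : E ≃L[ℝ] (Fin k → ℝ) × W)
    (hT : T '' C = {p : (Fin k → ℝ) × W | ∀ i, 0 ≤ p.1 i})
    (x : E) (hx : x ∈ C) :
    {i : Fin k | (T x).1 i = 0}.ncard =
      Module.finrank ℝ
        (E ⧸ (LinearMap.ker (projZ (W := W) {i : Fin k | (T x).1 i = 0})).comap
          (T.toLinearEquiv : E →ₗ[ℝ] (Fin k → ℝ) × W)) := by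
  classical
  set Z : Set (Fin k) := {i : Fin k | (T x).1 i = 0} with hZ
  haveI : Fintype ↥Z := Fintype.ofFinite _
  set M := LinearMap.ker (projZ (W := W) Z)
  have hmap : (M.comap (T.toLinearEquiv : E →ₗ[ℝ] (Fin k → ℝ) × W)).map
      (T.toLinearEquiv : E →ₗ[ℝ] (Fin k → ℝ) × W) = M :=
    Submodule.map_comap_eq_of_surjective T.toLinearEquiv.surjective M
  have e1 : (E ⧸ M.comap (T.toLinearEquiv : E →ₗ[ℝ] (Fin k → ℝ) × W)) ≃ₗ[ℝ]
      (((Fin k → ℝ) × W) ⧸ M) :=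
    Submodule.Quotient.equiv _ _ T.toLinearEquiv hmap
  have e2 : (((Fin k → ℝ) × W) ⧸ M) ≃ₗ[ℝ] (↥Z → ℝ) :=
    LinearMap.quotKerEquivOfSurjective _ (projZ_surjective Z)
  have : Module.finrank ℝ
      (E ⧸ M.comap (T.toLinearEquiv : E →ₗ[ℝ] (Fin k → ℝ) × W)) =
      Module.finrank ℝ (↥Z → ℝ) := (e1.trans e2).finrank_eq
  rw [this]
  rw [Module.finrank_fintype_fun_eq_card]
  rw [← Nat.card_eq_fintype_card, Nat.card_coe_set_eq]

theorem degeneracy_index_independent_of_sc_isomorphism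
    {E W W' : Type*} [NormedAddCommGroup E] [NormedSpace ℝ E]
    [NormedAddCommGroup W] [NormedSpace ℝ W]
    [NormedAddCommGroup W'] [NormedSpace ℝ W']
    {k k' : ℕ} (C : Set E) (hCclosed : IsClosed C) (hCconvex : Convex ℝ C)
    (T : E ≃L[ℝ] (Fin k → ℝ) × W) (T' : E ≃L[ℝ] (Fin k' → ℝ) × W')
    (hT : T '' C = {p : (Fin k → ℝ) × W | ∀ i, 0 ≤ p.1 i})
    (hT' : T' '' C = {p : (Fin k' → ℝ) × W' | ∀ i, 0 ≤ p.1 i})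
    (x : E) (hx : x ∈ C) :
    {i : Fin k | (T x).1 i = 0}.ncard = {i : Fin k' | (T' x).1 i = 0}.ncard := by
  have hsub : (LinearMap.ker (projZ (W := W) {i : Fin k | (T x).1 i = 0})).comap
      (T.toLinearEquiv : E →ₗ[ℝ] (Fin k → ℝ) × W) =
      (LinearMap.ker (projZ (W := W') {i : Fin k' | (T' x).1 i = 0})).comap
      (T'.toLinearEquiv : E →ₗ[ℝ] (Fin k' → ℝ) × W') := by
    ext v
    have m1 : ∀ (p : (Fin k → ℝ) × W),
        p ∈ LinearMap.ker (projZ (W := W) {i : Fin k | (T x).1 i = 0}) ↔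
        ∀ i, (T x).1 i = 0 → p.1 i = 0 := by
      intro p
      constructor
      · intro hp i hi
        exact congrFun hp ⟨i, hi⟩
      · intro hp
        funext i
        exact hp i.1 i.2
    have m2 : ∀ (p : (Fin k' → ℝ) × W'),
        p ∈ LinearMap.ker (projZ (W := W') {i : Fin k' | (T' x).1 i = 0}) ↔
        ∀ i, (T' x).1 i = 0 → p.1 i = 0 := by
      intro p
      constructor
      · intro hp i hi
        exact congrFun hp ⟨i, hi⟩
      · intro hp
        funext i
        exact hp i.1 i.2
    simp only [Submodule.mem_comap, m1, m2]
    rw [show ((T.toLinearEquiv : E →ₗ[ℝ] (Fin k → ℝ) × W) v) = T v from rfl,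
        show ((T'.toLinearEquiv : E →ₗ[ℝ] (Fin k' → ℝ) × W') v) = T' v from rfl,
        aux_char T hT x hx v, aux_char T' hT' x hx v]
  rw [ncard_eq_finrank T hT x hx, ncard_eq_finrank T' hT' x hx, hsub]
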